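/- Let G be a group with a distinguished involution i such that all involutions of G are conjugate and any two distinct involutions of G generate an infinite dihedral group. Then for any HNN extension G₁ of G (over any pair of isomorphic subgroups), all involutions of G₁ are conjugate and any two distinct involutions of G₁ generate an infinite dihedral group. -/

import Mathlib

/-- An involution is an element of order exactly 2. -/
def IsInvolution {G : Type*} [Group G] (g : G) : Prop := g ^ 2 = 1 ∧ g ≠ 1

/-- Two elements generate an infinite dihedral group. -/
def GenInfiniteDihedral {G : Type*} [Group G] (a b : G) : Prop :=
  Nonempty ((Subgroup.closure {a, b} : Subgroup G) ≃* DihedralGroup 0)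


open DihedralGroup in
lemma dihedral0_order_mul (x y : DihedralGroup 0) (hx : x ^ 2 = 1) (hx1 : x ≠ 1)
    (hy : y ^ 2 = 1) (hy1 : y ≠ 1) (hxy : x ≠ y) : orderOf (x * y) = 0 := by
  have hnzd : NoZeroDivisors (ZMod 0) := inferInstanceAs (NoZeroDivisors ℤ)
  have hr : ∀ i : ZMod 0, (r i) ^ 2 = 1 → i = 0 := by
    intro i h
    rw [pow_two, r_mul_r, one_def, r.injEq] at h
    have h2 : (2 : ZMod 0) * i = 0 := by rw [two_mul]; exact h
    rcases mul_eq_zero.1 h2 with h' | h'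
    · exact absurd h' two_ne_zero
    · exact h'
  obtain (i | i) := x
  · exact absurd (by rw [hr i hx]; rfl : r i = 1) hx1
  obtain (j | j) := y
  · exact absurd (by rw [hr j hy]; rfl : r j = 1) hy1
  have hij : j - i ≠ 0 := fun h => hxy (by rw [sub_eq_zero] at h; rw [h])
  rw [sr_mul_sr, orderOf_eq_zero_iff']
  intro n hn h1
  have hpow : ∀ m : ℕ, (r (j - i) : DihedralGroup 0) ^ m = r ((m : ZMod 0) * (j - i)) := by
    intro m
    induction m with
    | zero => simp
    | succ k ih =>
      rw [pow_succ, ih, r_mul_r, r.injEq]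
      push_cast
      ring
  rw [hpow, one_def, r.injEq] at h1
  rcases mul_eq_zero.1 h1 with h | h
  · exact absurd h (Nat.cast_ne_zero.2 hn.ne')
  · exact hij h

open DihedralGroup in
lemma gen_infinite_dihedral_of {M : Type*} [Group M] (a b : M)
    (ha : a ^ 2 = 1) (ha1 : a ≠ 1) (hb : b ^ 2 = 1)
    (hord : orderOf (a * b) = 0) :
    Nonempty ((Subgroup.closure {a, b} : Subgroup M) ≃* DihedralGroup 0) := by
  set c := a * b with hc
  have haa : a * a = 1 := by rw [← pow_two, ha]
  have hbb : b * b = 1 := by rw [← pow_two, hb]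
  have ha' : a⁻¹ = a := by rw [← mul_eq_one_iff_inv_eq]; exact haa
  have hb' : b⁻¹ = b := by rw [← mul_eq_one_iff_inv_eq]; exact hbb
  have hac : a * c * a⁻¹ = c⁻¹ := by
    rw [hc, mul_inv_rev, ha', hb']
    calc a * (a * b) * a = (a * a) * (b * a) := by group
    _ = b * a := by rw [haa, one_mul]
  have hconj : ∀ k : ℤ, a * c ^ k * a = c ^ (-k) := by
    intro k
    have h1 : (a * c * a⁻¹) ^ k = a * c ^ k * a⁻¹ := conj_zpow ..
    rw [hac, ha'] at h1
    rw [← h1, inv_zpow, zpow_neg]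
  have hca : ∀ k : ℤ, c ^ k * a = a * c ^ (-k) := by
    intro k
    rw [← hconj k, ← mul_assoc, ← mul_assoc, haa, one_mul]
  have hcinj : Function.Injective (fun k : ℤ => c ^ k) :=
    injective_zpow_iff_not_isOfFinOrder.2 (orderOf_eq_zero_iff.1 hord)
  have hzne : ∀ k : ℤ, c ^ k ≠ a := by
    intro k hk
    have h2 : c ^ (2 * k) = 1 := by
      rw [two_mul, zpow_add, hk, haa]
    have h2k : 2 * k = 0 := hcinj (a₁ := 2 * k) (a₂ := 0) (by simpa using h2)
    have hk0 : k = 0 := by omega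
    rw [hk0, zpow_zero] at hk
    exact ha1 hk.symm
  let z : ZMod 0 → ℤ := fun k => k
  have hzadd : ∀ i j : ZMod 0, z (i + j) = z i + z j := fun _ _ => rfl
  have hzsub : ∀ i j : ZMod 0, z (i - j) = z i - z j := fun _ _ => rfl
  have hzinj : Function.Injective z := fun _ _ h => h
  let f0 : DihedralGroup 0 → M := fun x => match x with
    | r k => c ^ z k
    | sr k => a * c ^ z k
  have hmul : ∀ x y : DihedralGroup 0, f0 (x * y) = f0 x * f0 y := by
    rintro (i | i) (j | j) <;>
      simp only [f0, r_mul_r, r_mul_sr, sr_mul_r, sr_mul_sr, hzadd, hzsub]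
    · rw [zpow_add]
    · -- a * c ^ (z j - z i) = c ^ z i * (a * c ^ z j)
      have : c ^ z i * (a * c ^ z j) = a * c ^ (z j - z i) :=
        calc c ^ z i * (a * c ^ z j) = (c ^ z i * a) * c ^ z j := by group
        _ = (a * c ^ (-z i)) * c ^ z j := by rw [hca]
        _ = a * (c ^ (-z i) * c ^ z j) := by group
        _ = a * c ^ (z j - z i) := by rw [← zpow_add]; congr 1; ring_nf
      exact this.symm
    · rw [mul_assoc, ← zpow_add]
    · -- c ^ (z j - z i) = (a * c ^ z i) * (a * c ^ z j)
      have : a * c ^ z i * (a * c ^ z j) = c ^ (z j - z i) :=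
        calc a * c ^ z i * (a * c ^ z j) = a * (c ^ z i * a) * c ^ z j := by group
        _ = a * (a * c ^ (-z i)) * c ^ z j := by rw [hca]
        _ = (a * a) * (c ^ (-z i) * c ^ z j) := by group
        _ = c ^ (z j - z i) := by rw [haa, one_mul, ← zpow_add]; congr 1; ring_nf
      exact this.symm
  let f : DihedralGroup 0 →* M := MonoidHom.mk' f0 hmul
  have hinj : Function.Injective f := by
    intro x y hxy
    match x, y with
    | r i, r j => exact congrArg r (hzinj (hcinj hxy))
    | sr i, sr j =>
      have : c ^ z i = c ^ z j := by
        have := hxy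
        simp only [f, f0, MonoidHom.mk'_apply] at this
        exact mul_left_cancel this
      exact congrArg sr (hzinj (hcinj this))
    | r i, sr j =>
      exfalso
      simp only [f, f0, MonoidHom.mk'_apply] at hxy
      have : c ^ (z i - z j) = a := by
        rw [zpow_sub, hxy]; group
      exact hzne _ this
    | sr i, r j =>
      exfalso
      simp only [f, f0, MonoidHom.mk'_apply] at hxy
      have : c ^ (z j - z i) = a := by
        rw [zpow_sub, ← hxy]; group
      exact hzne _ this
  have hrange : f.range = Subgroup.closure {a, b} := by
    apply le_antisymm
    · rintro x ⟨y, rfl⟩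
      have hac' : a ∈ Subgroup.closure {a, b} :=
        Subgroup.subset_closure (Set.mem_insert _ _)
      have hbc' : b ∈ Subgroup.closure {a, b} :=
        Subgroup.subset_closure (Set.mem_insert_of_mem _ rfl)
      have hcc : c ∈ Subgroup.closure {a, b} := mul_mem hac' hbc'
      match y with
      | r k => exact zpow_mem hcc _
      | sr k => exact mul_mem hac' (zpow_mem hcc _)
    · rw [Subgroup.closure_le]
      rintro x (rfl | rfl)
      · exact ⟨sr 0, by simp only [f, f0, MonoidHom.mk'_apply]; rw [show z 0 = 0 from rfl, zpow_zero, mul_one]⟩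
      · refine ⟨sr 1, ?_⟩
        simp only [f, f0, MonoidHom.mk'_apply]
        rw [show z 1 = 1 from rfl, zpow_one, hc, ← mul_assoc, haa, one_mul]
  exact ⟨((MulEquiv.subgroupCongr hrange.symm).trans
    ((MonoidHom.ofInjective hinj).symm.trans (MulEquiv.refl _))).symm.symm⟩

lemma orderOf_mul_invols {M : Type*} [Group M] (α β : M)
    (hα : α ^ 2 = 1) (hα1 : α ≠ 1) (hβ : β ^ 2 = 1) (hβ1 : β ≠ 1) (hne : α ≠ β)
    (e : (Subgroup.closure {α, β} : Subgroup M) ≃* DihedralGroup 0) :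
    orderOf (α * β) = 0 := by
  set H := (Subgroup.closure {α, β} : Subgroup M)
  let xa : H := ⟨α, Subgroup.subset_closure (Set.mem_insert _ _)⟩
  let xb : H := ⟨β, Subgroup.subset_closure (Set.mem_insert_of_mem _ rfl)⟩
  have h1 : orderOf (e xa * e xb) = 0 := by
    apply dihedral0_order_mul
    · rw [← map_pow]
      convert map_one e
      ext
      exact hα
    · intro h
      exact hα1 (congrArg Subtype.val (e.injective (h.trans (map_one e).symm)))
    · rw [← map_pow]
      convert map_one e
      ext
      exact hβ
    · intro h
      exact hβ1 (congrArg Subtype.val (e.injective (h.trans (map_one e).symm)))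
    · intro h
      exact hne (congrArg Subtype.val (e.injective h))
  rw [← map_mul, e.orderOf_eq] at h1
  rw [← h1]
  exact orderOf_injective H.subtype Subtype.coe_injective (xa * xb)


namespace HNNExtension
open NormalWord

variable {G : Type*} [Group G] (A B : Subgroup G) (φ : A ≃* B)

theorem conj_t_pow (u : ℤˣ) (g : G) (hg : g ∈ toSubgroup A B u) :
    (t ^ (u : ℤ) : HNNExtension G A B φ) * of g * (t ^ (u : ℤ))⁻¹ =
      of ((toSubgroupEquiv φ u ⟨g, hg⟩ : G)) := by
  rcases Int.units_eq_one_or u with rfl | rfl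
  · have h := (equiv_eq_conj (φ := φ) ⟨g, hg⟩).symm
    simp only [Units.val_one, zpow_one]
    exact h
  · have h := (equiv_symm_eq_conj (φ := φ) ⟨g, hg⟩).symm
    simp only [Units.val_neg, Units.val_one, zpow_neg, zpow_one, inv_inv]
    exact h

theorem core_pow_not_mem_range (w : ReducedWord G A B) (pl : ℤˣ × G)
    (hl : w.toList.getLast? = some pl)
    (hnp : pl.2 * w.head ∈ toSubgroup A B pl.1 → ∀ q ∈ w.toList.head?, pl.1 = q.1)
    (m : ℕ) (hm : 0 < m) :
    (w.prod φ) ^ m ∉ (of.range : Subgroup (HNNExtension G A B φ)) := by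
  set P : ℤˣ × G → ℤˣ × G → Prop :=
    fun a b => a.2 ∈ toSubgroup A B a.1 → a.1 = b.1 with hP
  set J : List (ℤˣ × G) := w.toList.dropLast ++ [(pl.1, pl.2 * w.head)] with hJ
  have hwl : w.toList.dropLast ++ [pl] = w.toList :=
    List.dropLast_append_getLast? _ hl
  have hJchain : J.Chain' P := by
    have h1 : (w.toList.dropLast ++ [pl]).Chain' P := by rw [hwl]; exact w.chain
    change List.IsChain P _ at h1 ⊢
    rw [List.isChain_append] at h1 ⊢
    refine ⟨h1.1, List.isChain_singleton _, ?_⟩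
    intro x hx y hy
    simp only [List.head?_cons, Option.mem_some_iff] at hy
    subst hy
    exact h1.2.2 x hx pl (by simp)
  have hJlast : J.getLast? = some (pl.1, pl.2 * w.head) := by
    simp [hJ]
  have hJne : J ≠ [] := by simp [hJ]
  have hJhead : J.head?.map Prod.fst = w.toList.head?.map Prod.fst := by
    rcases h : w.toList.dropLast with _ | ⟨x, xs⟩
    · rw [h] at hwl hJ
      rw [hJ, ← hwl]
      simp
    · rw [h] at hwl hJ
      rw [hJ, ← hwl]
      rw [List.head?_append_of_ne_nil _ (by simp), List.head?_append_of_ne_nil _ (by simp)]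
  have key : ∀ k : ℕ, ∃ v : ReducedWord G A B, v.prod φ = (w.prod φ) ^ (k + 1) ∧
      v.toList.head?.map Prod.fst = w.toList.head?.map Prod.fst ∧
      v.toList ≠ [] ∧ v.head = w.head := by
    intro k
    induction k with
    | zero =>
      refine ⟨w, by simp, rfl, ?_, rfl⟩
      intro h
      rw [h] at hl; simp at hl
    | succ k ihk =>
      obtain ⟨v, hv1, hv2, hv3, hv4⟩ := ihk
      have hchain : (J ++ v.toList).Chain' P := by
        change List.IsChain P _
        rw [List.isChain_append]
        refine ⟨hJchain, v.chain, ?_⟩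
        intro x hx y hy
        rw [hJlast, Option.mem_some_iff] at hx
        subst hx
        intro hmem
        have h5 : (v.toList.head?.map Prod.fst) = some y.1 := by
          rw [hy]; rfl
        rw [hv2] at h5
        obtain ⟨q, hq1, hq2⟩ := Option.map_eq_some_iff.1 h5
        rw [← hq2]
        exact hnp hmem q hq1
      refine ⟨⟨w.head, J ++ v.toList, hchain⟩, ?_, ?_,
        fun h => hJne (List.append_eq_nil_iff.1 h).1, rfl⟩
      · show of w.head * (((J ++ v.toList).map
            (fun x => t ^ (x.1 : ℤ) * of x.2)).prod : HNNExtension G A B φ) = _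
        have hwprod : w.prod φ = of w.head *
            ((w.toList.dropLast.map (fun x => t ^ (x.1 : ℤ) * of x.2)).prod *
              (t ^ (pl.1 : ℤ) * of pl.2) : HNNExtension G A B φ) := by
          rw [ReducedWord.prod, ← hwl]
          simp [mul_assoc]
        have hvprod : v.prod φ = of w.head *
            ((v.toList.map (fun x => t ^ (x.1 : ℤ) * of x.2)).prod : HNNExtension G A B φ) := by
          rw [ReducedWord.prod, hv4]
        have hgoal : of w.head * (((J ++ v.toList).map
            (fun x => t ^ (x.1 : ℤ) * of x.2)).prod : HNNExtension G A B φ) =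
            w.prod φ * v.prod φ := by
          rw [hwprod, hvprod, hJ]
          simp [List.map_append, mul_assoc, map_mul]
        rw [hgoal, hv1, ← pow_succ']
      · rw [List.head?_append_of_ne_nil _ hJne]
        exact hJhead
  intro hmem
  obtain ⟨v, hv1, _, hv3, _⟩ := key (m - 1)
  rw [Nat.sub_add_cancel hm] at hv1
  rw [← hv1] at hmem
  exact hv3 (ReducedWord.toList_eq_nil_of_mem_of_range φ v hmem)

end HNNExtension

namespace HNNExtension

variable {G : Type*} [Group G] (A B : Subgroup G) (φ : A ≃* B)

open NormalWord

theorem main_conj_into_base (α : G) (b : HNNExtension G A B φ) (hb : b ^ 2 = 1)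
    (m : ℕ) (hm : 0 < m) (hab : (of α * b) ^ m = 1) :
    ∃ g : HNNExtension G A B φ, g * b * g⁻¹ ∈ (of.range : Subgroup (HNNExtension G A B φ)) ∧
      g * of α * g⁻¹ ∈ (of.range : Subgroup (HNNExtension G A B φ)) := by
  obtain ⟨d⟩ := NormalWord.TransversalPair.nonempty G A B
  suffices h : ∀ n : ℕ, ∀ (α : G) (b : HNNExtension G A B φ), b ^ 2 = 1 →
      ∀ m : ℕ, 0 < m → (of α * b) ^ m = 1 →
      ((NormalWord.equiv φ d b).toReducedWord.toList).length = n →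
      ∃ g : HNNExtension G A B φ,
        g * b * g⁻¹ ∈ (of.range : Subgroup (HNNExtension G A B φ)) ∧
        g * of α * g⁻¹ ∈ (of.range : Subgroup (HNNExtension G A B φ)) by
    exact h _ α b hb m hm hab rfl
  intro n
  induction n using Nat.strong_induction_on with
  | _ n ih =>
  intro α b hb m hm hab hlen
  set w : ReducedWord G A B := (NormalWord.equiv φ d b).toReducedWord with hw
  have hprod : w.prod φ = b := (NormalWord.equiv φ d).symm_apply_apply b
  rcases n with _ | n
  · -- base case : b is in the base group
    have hnil : w.toList = [] := List.length_eq_zero_iff.1 hlen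
    have hbof : b = of w.head := by
      rw [← hprod, ReducedWord.prod, hnil]
      simp
    refine ⟨1, ?_, ?_⟩
    · rw [one_mul, inv_one, mul_one, hbof]; exact ⟨w.head, rfl⟩
    · rw [one_mul, inv_one, mul_one]; exact ⟨α, rfl⟩
  · -- inductive step
    have hne : w.toList ≠ [] := by
      intro h; rw [h] at hlen; simp at hlen
    obtain ⟨pl, hl⟩ : ∃ pl, w.toList.getLast? = some pl :=
      ⟨w.toList.getLast hne, List.getLast?_eq_getLast hne⟩
    have hnp1 : ¬ (pl.2 * w.head ∈ toSubgroup A B pl.1 →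
        ∀ q ∈ w.toList.head?, pl.1 = q.1) := by
      intro h
      exact core_pow_not_mem_range A B φ w pl hl h 2 (by norm_num)
        (by rw [hprod, hb]; exact one_mem _)
    push_neg at hnp1
    obtain ⟨hmem1, q, hq, hqne⟩ := hnp1
    have hnp2 : ¬ (pl.2 * (α * w.head) ∈ toSubgroup A B pl.1 →
        ∀ q ∈ w.toList.head?, pl.1 = q.1) := by
      intro h
      have hprodc : (⟨α * w.head, w.toList, w.chain⟩ : ReducedWord G A B).prod φ
          = of α * b := by
        rw [← hprod, ReducedWord.prod, ReducedWord.prod, map_mul, mul_assoc]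
      exact core_pow_not_mem_range A B φ ⟨α * w.head, w.toList, w.chain⟩ pl hl h m hm
        (by rw [hprodc, hab]; exact one_mem _)
    push_neg at hnp2
    obtain ⟨hmem2, -⟩ := hnp2
    have h3 : pl.2 * α * pl.2⁻¹ ∈ toSubgroup A B pl.1 := by
      have h4 := mul_mem hmem2 (inv_mem hmem1)
      have h5 : pl.2 * (α * w.head) * (pl.2 * w.head)⁻¹ = pl.2 * α * pl.2⁻¹ := by group
      rwa [h5] at h4
    -- decompose the word of b
    have hwl : w.toList.dropLast ++ [pl] = w.toList :=
      List.dropLast_append_getLast? _ hl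
    have hL₀ne : w.toList.dropLast ≠ [] := by
      intro h
      rw [h, List.nil_append] at hwl
      rw [← hwl] at hq
      simp only [List.head?_cons, Option.mem_some_iff] at hq
      exact hqne (by rw [← hq])
    obtain ⟨q', L₁, hL₀⟩ : ∃ q' L₁, w.toList.dropLast = q' :: L₁ :=
      List.exists_cons_of_ne_nil hL₀ne
    have hq' : q' = q := by
      rw [hL₀] at hwl
      rw [← hwl] at hq
      simpa using hq
    subst hq'
    have hlist : w.toList = q' :: (L₁ ++ [pl]) := by
      rw [← hwl, hL₀]; simp
    -- sign condition
    have hsign : q'.1 = -pl.1 := by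
      rcases Int.units_eq_one_or pl.1 with h | h <;>
        rcases Int.units_eq_one_or q'.1 with h' | h' <;> rw [h, h'] <;> rw [h, h'] at hqne <;>
          first | decide | exact absurd rfl hqne
    have hts : (t ^ (q'.1 : ℤ) : HNNExtension G A B φ) = (t ^ (pl.1 : ℤ))⁻¹ := by
      rw [hsign, Units.val_neg, zpow_neg]
    -- the new words
    set β₀ : G := (toSubgroupEquiv φ pl.1 ⟨pl.2 * w.head, hmem1⟩ : G) with hβ₀
    set αβ : G := (toSubgroupEquiv φ pl.1 ⟨pl.2 * α * pl.2⁻¹, h3⟩ : G) with hαβ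
    have hchainL₁ : L₁.Chain' (fun a b => a.2 ∈ toSubgroup A B a.1 → a.1 = b.1) := by
      apply w.chain.infix
      exact ⟨[q'], [pl], by rw [hlist]; simp⟩
    set w' : ReducedWord G A B := ⟨β₀ * q'.2, L₁, hchainL₁⟩ with hw'
    set g₁ : HNNExtension G A B φ := t ^ (pl.1 : ℤ) * of pl.2 with hg₁
    have hb_decomp : b = of w.head * ((t ^ (q'.1 : ℤ) * of q'.2) *
        ((L₁.map (fun x => t ^ (x.1 : ℤ) * of x.2)).prod *
          (t ^ (pl.1 : ℤ) * of pl.2))) := by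
      rw [← hprod, ReducedWord.prod, hlist]
      simp [mul_assoc]
    have hconjb : g₁ * b * g₁⁻¹ = w'.prod φ := by
      have h6 : g₁ * b * g₁⁻¹ = (t ^ (pl.1 : ℤ) * (of pl.2 * of w.head) *
          (t ^ (pl.1 : ℤ))⁻¹) * (of q'.2 *
          (L₁.map (fun x => t ^ (x.1 : ℤ) * of x.2)).prod) := by
        rw [hb_decomp, hts, hg₁]
        group
      rw [h6, ← map_mul, conj_t_pow A B φ pl.1 _ hmem1]
      show _ = of (β₀ * q'.2) * _
      rw [map_mul, mul_assoc]
    have hconjα : g₁ * of α * g₁⁻¹ = of αβ := by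
      have h7 : g₁ * of α * g₁⁻¹ = t ^ (pl.1 : ℤ) * (of pl.2 * of α * (of pl.2)⁻¹) *
          (t ^ (pl.1 : ℤ))⁻¹ := by
        rw [hg₁]; group
      rw [h7, ← map_inv, ← map_mul, ← map_mul, conj_t_pow A B φ pl.1 _ h3]
    -- length decreases
    have hlen' : ((NormalWord.equiv φ d (w'.prod φ)).toReducedWord.toList).length
        = L₁.length := by
      have h8 := (ReducedWord.map_fst_eq_and_of_prod_eq φ
        (w₁ := (NormalWord.equiv φ d (w'.prod φ)).toReducedWord) (w₂ := w')
        ((NormalWord.equiv φ d).symm_apply_apply (w'.prod φ))).1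
      have h9 := congrArg List.length h8
      simpa using h9
    have hlt : L₁.length < n + 1 := by
      have : w.toList.length = n + 1 := hlen
      rw [hlist] at this
      simp at this
      omega
    -- new hypotheses
    have hb' : (w'.prod φ) ^ 2 = 1 := by
      rw [← hconjb, conj_pow, hb, mul_one, mul_inv_cancel]
    have hab' : (of αβ * w'.prod φ) ^ m = 1 := by
      rw [← hconjα, ← hconjb]
      have : g₁ * of α * g₁⁻¹ * (g₁ * b * g₁⁻¹) = g₁ * (of α * b) * g₁⁻¹ := by group
      rw [this, conj_pow, hab, mul_one, mul_inv_cancel]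
    obtain ⟨g₂, h2b, h2α⟩ := ih L₁.length hlt αβ (w'.prod φ) hb' m hm hab' hlen'
    refine ⟨g₂ * g₁, ?_, ?_⟩
    · have : g₂ * g₁ * b * (g₂ * g₁)⁻¹ = g₂ * (g₁ * b * g₁⁻¹) * g₂⁻¹ := by group
      rw [this, hconjb]
      exact h2b
    · have : g₂ * g₁ * of α * (g₂ * g₁)⁻¹ = g₂ * (g₁ * of α * g₁⁻¹) * g₂⁻¹ := by group
      rw [this, hconjα]
      exact h2α

end HNNExtension


/-- Let `G` be a group with an involution `i` such that all involutions of `G` are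
conjugate and any two distinct involutions of `G` generate an infinite dihedral group.
Then in any HNN extension `G₁` of `G` (over any pair of isomorphic subgroups `A ≃* B`),
all involutions are conjugate and any two distinct involutions generate an infinite
dihedral group. -/
theorem hnn_preserves_involution_conditions {G : Type*} [Group G]
    (i : G) (hi : IsInvolution i)
    (hconjG : ∀ a b : G, IsInvolution a → IsInvolution b → IsConj a b)
    (hdihG : ∀ a b : G, IsInvolution a → IsInvolution b → a ≠ b → GenInfiniteDihedral a b)
    (A B : Subgroup G) (φ : A ≃* B) :
    (∀ a b : HNNExtension G A B φ, IsInvolution a → IsInvolution b → IsConj a b) ∧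
    (∀ a b : HNNExtension G A B φ, IsInvolution a → IsInvolution b → a ≠ b →
      GenInfiniteDihedral a b) := by
  classical
  -- transfer of involution property along conjugation into the base group
  have hinvol : ∀ (x : HNNExtension G A B φ) (g : HNNExtension G A B φ) (α : G),
      g * x * g⁻¹ = HNNExtension.of α → IsInvolution x → IsInvolution α := by
    intro x g α hconj hx
    constructor
    · apply HNNExtension.of_injective (φ := φ)
      rw [map_pow, map_one, ← hconj, conj_pow, hx.1, mul_one, mul_inv_cancel]
    · intro h1
      apply hx.2
      rw [h1, map_one] at hconj
      calc x = g⁻¹ * (g * x * g⁻¹) * g := by group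
      _ = 1 := by rw [hconj]; group
  -- every involution is conjugate into the base group
  have hT1 : ∀ x : HNNExtension G A B φ, IsInvolution x →
      ∃ (g : HNNExtension G A B φ) (α : G),
        g * x * g⁻¹ = HNNExtension.of α ∧ IsInvolution α := by
    intro x hx
    obtain ⟨g, hgb, -⟩ := HNNExtension.main_conj_into_base A B φ 1 x hx.1 2 (by norm_num)
      (by rw [map_one, one_mul, hx.1])
    obtain ⟨α, hα⟩ := hgb
    exact ⟨g, α, hα.symm, hinvol x g α hα.symm hx⟩
  constructor
  · -- all involutions are conjugate
    intro a b ha hb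
    obtain ⟨g, α, hga, hαi⟩ := hT1 a ha
    obtain ⟨h, β, hhb, hβi⟩ := hT1 b hb
    obtain ⟨u, hu⟩ := isConj_iff.1 (hconjG α β hαi hβi)
    have hc2 : IsConj (HNNExtension.of α : HNNExtension G A B φ) (HNNExtension.of β) :=
      isConj_iff.2 ⟨HNNExtension.of u, by rw [← map_inv, ← map_mul, ← map_mul, hu]⟩
    exact (isConj_iff.2 ⟨g, hga⟩).trans (hc2.trans (isConj_iff.2 ⟨h, hhb⟩).symm)
  · -- distinct involutions generate infinite dihedral groups
    intro a b ha hb hne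
    have horder : orderOf (a * b) = 0 := by
      by_contra h0
      have hm : 0 < orderOf (a * b) := Nat.pos_of_ne_zero h0
      have hab : (a * b) ^ (orderOf (a * b)) = 1 := pow_orderOf_eq_one _
      obtain ⟨g₀, α, hga, hαi⟩ := hT1 a ha
      have hb₀2 : (g₀ * b * g₀⁻¹) ^ 2 = 1 := by
        rw [conj_pow, hb.1, mul_one, mul_inv_cancel]
      have hcomb : HNNExtension.of α * (g₀ * b * g₀⁻¹) = g₀ * (a * b) * g₀⁻¹ := by
        rw [← hga]; group
      have hab' : (HNNExtension.of α * (g₀ * b * g₀⁻¹)) ^ (orderOf (a * b)) = 1 := by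
        rw [hcomb, conj_pow, hab, mul_one, mul_inv_cancel]
      obtain ⟨g₁, h1b, h1α⟩ :=
        HNNExtension.main_conj_into_base A B φ α (g₀ * b * g₀⁻¹) hb₀2 _ hm hab'
      obtain ⟨β, hβ⟩ := h1b
      obtain ⟨α', hα'⟩ := h1α
      have hgb : (g₁ * g₀) * b * (g₁ * g₀)⁻¹ = HNNExtension.of β := by
        rw [hβ]; group
      have hgab : (g₁ * g₀) * a * (g₁ * g₀)⁻¹ = HNNExtension.of α' := by
        rw [hα', ← hga]; group
      have hβi : IsInvolution β := hinvol b (g₁ * g₀) β hgb hb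
      have hα'i : IsInvolution α' := hinvol a (g₁ * g₀) α' hgab ha
      have hαβne : α' ≠ β := by
        intro h
        apply hne
        have h2 : (g₁ * g₀) * a * (g₁ * g₀)⁻¹ = (g₁ * g₀) * b * (g₁ * g₀)⁻¹ := by
          rw [hgab, hgb, h]
        calc a = (g₁ * g₀)⁻¹ * ((g₁ * g₀) * a * (g₁ * g₀)⁻¹) * (g₁ * g₀) := by group
        _ = (g₁ * g₀)⁻¹ * ((g₁ * g₀) * b * (g₁ * g₀)⁻¹) * (g₁ * g₀) := by rw [h2]
        _ = b := by group
      obtain ⟨e⟩ := hdihG α' β hα'i hβi hαβne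
      have h00 : orderOf (α' * β) = 0 :=
        orderOf_mul_invols α' β hα'i.1 hα'i.2 hβi.1 hβi.2 hαβne e
      apply h0
      have hcc : (g₁ * g₀) * (a * b) * (g₁ * g₀)⁻¹ = HNNExtension.of (α' * β) := by
        rw [map_mul, ← hgab, ← hgb]; group
      have h01 : orderOf (HNNExtension.of (α' * β) : HNNExtension G A B φ) = 0 := by
        rw [orderOf_injective (HNNExtension.of (φ := φ))
          (HNNExtension.of_injective (φ := φ)) (α' * β)]
        exact h00
      have h02 : HNNExtension.of (α' * β) = (MulAut.conj (g₁ * g₀)) (a * b) := by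
        rw [MulAut.conj_apply, hcc]
      rw [h02, MulEquiv.orderOf_eq] at h01
      exact h01
    exact gen_infinite_dihedral_of a b ha.1 ha.2 hb.1 horder
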